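/- arXiv:1906.04932 — 2 statements merged into one kernel-verified Lean document; each statement's English description precedes it below -/
import Mathlib

section
/- Under the hypotheses that every point of PG(4,q) (q even) lies in 0, q^3/2, or (q^3+q^2)/2 solids of a nonempty set H of solids, every solid in H contains exactly (q+1)^2 black points (points lying in (q^3+q^2)/2 solids of H), and |H| = (1/2)q^2(q^2+1). -/
open Submodule Set

/-- Points of `PG(4,q)`: one-dimensional subspaces of `F^5`. -/
abbrev PGPoint (F : Type*) [Field F] := {W : Submodule F (Fin 5 → F) // Module.finrank F W = 1}
/-- Lines of `PG(4,q)`: two-dimensional subspaces of `F^5`. -/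
abbrev PGLine (F : Type*) [Field F] := {W : Submodule F (Fin 5 → F) // Module.finrank F W = 2}
/-- Planes of `PG(4,q)`: three-dimensional subspaces of `F^5`. -/
abbrev PGPlane (F : Type*) [Field F] := {W : Submodule F (Fin 5 → F) // Module.finrank F W = 3}
/-- Solids (hyperplanes) of `PG(4,q)`: four-dimensional subspaces of `F^5`. -/
abbrev PGSolid (F : Type*) [Field F] := {W : Submodule F (Fin 5 → F) // Module.finrank F W = 4}

variable {F : Type*} [Field F]

/-- The solids of `H` through the point `P`. -/
def solidsThrough (H : Set (PGSolid F)) (P : PGPoint F) : Set (PGSolid F) :=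
  {S ∈ H | P.1 ≤ S.1}

/-- Hypothesis (I): every point lies on `0`, `q^3/2` or `(q^3+q^2)/2` solids of `H`. -/
def CondI (q : ℕ) (H : Set (PGSolid F)) : Prop :=
  ∀ P : PGPoint F,
    (solidsThrough H P).ncard = 0 ∨
    2 * (solidsThrough H P).ncard = q ^ 3 ∨
    2 * (solidsThrough H P).ncard = q ^ 3 + q ^ 2

/-- A red point: lies on no solid of `H`. -/
def Red (H : Set (PGSolid F)) (P : PGPoint F) : Prop := (solidsThrough H P).ncard = 0

/-- A white point: lies on `q^3/2` solids of `H`. -/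
def White (q : ℕ) (H : Set (PGSolid F)) (P : PGPoint F) : Prop :=
  2 * (solidsThrough H P).ncard = q ^ 3

/-- A black point: lies on `(q^3+q^2)/2` solids of `H`. -/
def Black (q : ℕ) (H : Set (PGSolid F)) (P : PGPoint F) : Prop :=
  2 * (solidsThrough H P).ncard = q ^ 3 + q ^ 2

/-- The black points contained in a subspace `W`. -/
def blackIn (q : ℕ) (H : Set (PGSolid F)) (W : Submodule F (Fin 5 → F)) : Set (PGPoint F) :=
  {P : PGPoint F | Black q H P ∧ P.1 ≤ W}

variable [Fintype F]
set_option maxHeartbeats 1000000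
set_option linter.unusedSectionVars false


instance : Finite (Submodule F (Fin 5 → F)) :=
  Finite.of_injective (fun W => (W : Set (Fin 5 → F))) SetLike.coe_injective

noncomputable instance : Fintype (PGPoint F) := Fintype.ofFinite _
noncomputable instance : Fintype (PGSolid F) := Fintype.ofFinite _

instance : Nonempty (PGPoint F) := by
  have h1 : (Pi.single (0 : Fin 5) (1:F)) ≠ (0 : Fin 5 → F) := by
    intro h
    have := congrFun h 0
    simp at this
  exact ⟨⟨span F {Pi.single (0:Fin 5) (1:F)}, finrank_span_singleton h1⟩⟩

open Finset in
lemma card_pointsIn (W : Submodule F (Fin 5 → F)) (d : ℕ) (hd : Module.finrank F W = d) :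
    (Fintype.card F - 1) * {P : PGPoint F | P.1 ≤ W}.ncard = Fintype.card F ^ d - 1 := by
  classical
  set q := Fintype.card F with hq
  set A : Finset (Fin 5 → F) := (univ.filter (· ∈ W)).erase 0 with hA
  set B : Finset (PGPoint F) := univ.filter (fun P => P.1 ≤ W) with hB
  set f : (Fin 5 → F) → PGPoint F := fun v =>
    if h : v = 0 then Classical.arbitrary _ else ⟨span F {v}, finrank_span_singleton h⟩ with hf
  have hmem : ∀ v ∈ A, f v ∈ B := by
    intro v hv
    rw [hA, Finset.mem_erase, Finset.mem_filter] at hv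
    obtain ⟨hv0, -, hvW⟩ := hv
    rw [hB, Finset.mem_filter]
    refine ⟨Finset.mem_univ _, ?_⟩
    rw [hf]
    simp only [dif_neg hv0]
    exact span_le.2 (Set.singleton_subset_iff.2 hvW)
  have key := Finset.card_eq_sum_card_fiberwise hmem
  have hcardW : ∀ (V : Submodule F (Fin 5 → F)) (e : ℕ), Module.finrank F V = e →
      (univ.filter (· ∈ V)).card = q ^ e := by
    intro V e he
    have h1 : Nat.card V = q ^ e := by
      letI : Fintype V := Fintype.ofFinite _
      rw [Nat.card_eq_fintype_card, hq, Module.card_eq_pow_finrank (K := F) (V := ↥V), he]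
    calc (univ.filter (· ∈ V)).card = (V : Set (Fin 5 → F)).toFinset.card := by
          congr 1; ext v; simp
      _ = (V : Set (Fin 5 → F)).ncard := (Set.ncard_eq_toFinset_card' _).symm
      _ = Nat.card V := (Nat.card_coe_set_eq _).symm
      _ = q ^ e := h1
  have hAcard : A.card = q ^ d - 1 := by
    rw [hA, card_erase_of_mem (by simp [W.zero_mem]), hcardW W d hd]
  have hfiber : ∀ P ∈ B, (A.filter (fun v => f v = P)).card = q - 1 := by
    intro P hP
    rw [hB, Finset.mem_filter] at hP
    have heq : A.filter (fun v => f v = P) = (univ.filter (· ∈ P.1)).erase 0 := by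
      ext v
      simp only [hA, Finset.mem_filter, Finset.mem_erase, Finset.mem_univ, true_and]
      constructor
      · rintro ⟨⟨hv0, hvW⟩, hfv⟩
        refine ⟨hv0, ?_⟩
        rw [hf] at hfv
        simp only [dif_neg hv0] at hfv
        have hsp : span F {v} = P.1 := congrArg Subtype.val hfv
        rw [← hsp]
        exact subset_span (Set.mem_singleton v)
      · rintro ⟨hv0, hvP⟩
        have hsp : span F {v} = P.1 :=
          eq_of_le_of_finrank_eq (span_le.2 (Set.singleton_subset_iff.2 hvP))
            (by rw [finrank_span_singleton hv0, P.2])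
        refine ⟨⟨hv0, hP.2 hvP⟩, ?_⟩
        rw [hf]
        simp only [dif_neg hv0]
        exact Subtype.ext hsp
    rw [heq, card_erase_of_mem (by simp [P.1.zero_mem]), hcardW P.1 1 P.2, pow_one]
  have hmain : A.card = B.card * (q - 1) := by
    rw [key, Finset.sum_congr rfl hfiber, Finset.sum_const, smul_eq_mul]
  rw [hAcard] at hmain
  have hBn : {P : PGPoint F | P.1 ≤ W}.ncard = B.card := by
    rw [Set.ncard_eq_toFinset_card']
    congr 1
    ext P
    simp [hB]
  rw [hBn, mul_comm, hmain]

section specialize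
variable {q : ℕ} (hcard : Fintype.card F = q)
include hcard

lemma hq2' : 2 ≤ q := hcard ▸ Fintype.one_lt_card

lemma ncard_points4 (W : Submodule F (Fin 5 → F)) (h4 : Module.finrank F W = 4) :
    {P : PGPoint F | P.1 ≤ W}.ncard = q^3 + q^2 + q + 1 := by
  have h := card_pointsIn W 4 h4
  rw [hcard] at h
  have hq2 : 2 ≤ q := hq2' hcard
  apply Nat.eq_of_mul_eq_mul_left (show 0 < q - 1 by omega)
  rw [h, Nat.sub_one_mul]
  have hm : q * (q^3 + q^2 + q + 1) = q^4 + q^3 + q^2 + q := by ring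
  rw [hm]
  omega

lemma ncard_points3 (W : Submodule F (Fin 5 → F)) (h3 : Module.finrank F W = 3) :
    {P : PGPoint F | P.1 ≤ W}.ncard = q^2 + q + 1 := by
  have h := card_pointsIn W 3 h3
  rw [hcard] at h
  have hq2 : 2 ≤ q := hq2' hcard
  apply Nat.eq_of_mul_eq_mul_left (show 0 < q - 1 by omega)
  rw [h, Nat.sub_one_mul]
  have hm : q * (q^2 + q + 1) = q^3 + q^2 + q := by ring
  rw [hm]
  omega

end specialize

lemma finrank_inf_solids (S T : PGSolid F) (hne : S ≠ T) :
    Module.finrank F ↥(S.1 ⊓ T.1) = 3 := by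
  have h5 : Module.finrank F (Fin 5 → F) = 5 := by
    rw [Module.finrank_pi]; simp
  have hlt : S.1 < S.1 ⊔ T.1 := by
    rcases lt_or_eq_of_le (le_sup_left : S.1 ≤ S.1 ⊔ T.1) with h | h
    · exact h
    · exfalso
      have hT : T.1 ≤ S.1 := by rw [h]; exact le_sup_right
      exact hne (Subtype.ext ((eq_of_le_of_finrank_eq hT (T.2.trans S.2.symm)).symm))
  have h1 := Submodule.finrank_le (S.1 ⊔ T.1)
  rw [h5] at h1
  have h2 := Submodule.finrank_lt_finrank_of_lt hlt
  rw [S.2] at h2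
  have h3 := Submodule.finrank_sup_add_finrank_inf_eq S.1 T.1
  rw [S.2, T.2] at h3
  omega

set_option linter.unusedSectionVars false
set_option maxHeartbeats 1000000

open scoped Classical in
open Finset in
lemma swap_count {α β : Type*} [Fintype α] [Fintype β] (R : α → β → Prop)
    (A : Finset α) (B : Finset β) :
    ∑ a ∈ A, (B.filter (fun b => R a b)).card = ∑ b ∈ B, (A.filter (fun a => R a b)).card := by
  simp only [Finset.card_filter]
  rw [Finset.sum_comm]

open scoped Classical in
open Finset in
lemma nP_eq_filter (H : Set (PGSolid F)) (P : PGPoint F) :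
    (solidsThrough H P).ncard = (H.toFinset.filter (fun S => P.1 ≤ S.1)).card := by
  rw [Set.ncard_eq_toFinset_card']
  congr 1
  ext S
  simp only [Set.mem_toFinset]
  simp [solidsThrough]

open scoped Classical in
open Finset in
lemma pts_eq_filter (V : Submodule F (Fin 5 → F)) :
    {P : PGPoint F | P.1 ≤ V}.ncard = (univ.filter (fun P : PGPoint F => P.1 ≤ V)).card := by
  rw [Set.ncard_eq_toFinset_card']
  congr 1
  ext P
  simp

open scoped Classical in
open Finset in
lemma geom_E1 {q : ℕ} (hcard : Fintype.card F = q) (H : Set (PGSolid F)) :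
    ∑ P : PGPoint F, (solidsThrough H P).ncard = H.ncard * (q^3 + q^2 + q + 1) := by
  calc ∑ P : PGPoint F, (solidsThrough H P).ncard
      = ∑ P ∈ univ, (H.toFinset.filter (fun S => P.1 ≤ S.1)).card :=
        Finset.sum_congr rfl (fun P _ => nP_eq_filter H P)
    _ = ∑ S ∈ H.toFinset, (univ.filter (fun P : PGPoint F => P.1 ≤ S.1)).card :=
      by simp only [Finset.card_filter]; rw [Finset.sum_comm]
    _ = ∑ S ∈ H.toFinset, (q^3 + q^2 + q + 1) := by
        refine Finset.sum_congr rfl (fun S _ => ?_)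
        rw [← pts_eq_filter, ncard_points4 hcard S.1 S.2]
    _ = H.ncard * (q^3 + q^2 + q + 1) := by
        rw [Finset.sum_const, smul_eq_mul, Set.ncard_eq_toFinset_card']

open scoped Classical in
open Finset in
lemma geom_E3 {q : ℕ} (hcard : Fintype.card F = q) (H : Set (PGSolid F))
    (S₀ : PGSolid F) (hS₀ : S₀ ∈ H) :
    ∑ P ∈ univ.filter (fun P : PGPoint F => P.1 ≤ S₀.1), (solidsThrough H P).ncard
      = (q^3 + q^2 + q + 1) + (H.ncard - 1) * (q^2 + q + 1) := by
  rw [Set.ncard_eq_toFinset_card']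
  calc ∑ P ∈ univ.filter (fun P : PGPoint F => P.1 ≤ S₀.1), (solidsThrough H P).ncard
      = ∑ P ∈ univ.filter (fun P : PGPoint F => P.1 ≤ S₀.1),
          (H.toFinset.filter (fun S => P.1 ≤ S.1)).card :=
        Finset.sum_congr rfl (fun P _ => nP_eq_filter H P)
    _ = ∑ S ∈ H.toFinset,
          ((univ.filter (fun P : PGPoint F => P.1 ≤ S₀.1)).filter (fun P => P.1 ≤ S.1)).card :=
      by simp only [Finset.card_filter]; rw [Finset.sum_comm]
    _ = ∑ S ∈ H.toFinset, {P : PGPoint F | P.1 ≤ S₀.1 ⊓ S.1}.ncard := by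
        refine Finset.sum_congr rfl (fun S _ => ?_)
        rw [pts_eq_filter, Finset.filter_filter]
        congr 1
        ext P
        simp [le_inf_iff]
    _ = (q^3 + q^2 + q + 1) + (H.toFinset.card - 1) * (q^2 + q + 1) := by
        rw [← Finset.add_sum_erase _ _ (Set.mem_toFinset.2 hS₀)]
        congr 1
        · rw [show S₀.1 ⊓ S₀.1 = S₀.1 from inf_idem _, ncard_points4 hcard S₀.1 S₀.2]
        · have hc : ∀ S ∈ H.toFinset.erase S₀,
              {P : PGPoint F | P.1 ≤ S₀.1 ⊓ S.1}.ncard = q^2 + q + 1 := by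
            intro S hS
            rw [Finset.mem_erase] at hS
            exact ncard_points3 hcard _ (finrank_inf_solids S₀ S (Ne.symm hS.1))
          rw [Finset.sum_congr rfl hc, Finset.sum_const, smul_eq_mul,
            Finset.card_erase_of_mem (Set.mem_toFinset.2 hS₀)]


open scoped Classical in
open Finset in
lemma geom_E2 (H : Set (PGSolid F)) :
    ∑ S ∈ H.toFinset, ∑ P ∈ univ.filter (fun P : PGPoint F => P.1 ≤ S.1),
        (solidsThrough H P).ncard
      = ∑ P : PGPoint F, (solidsThrough H P).ncard ^ 2 := by
  calc ∑ S ∈ H.toFinset, ∑ P ∈ univ.filter (fun P : PGPoint F => P.1 ≤ S.1),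
          (solidsThrough H P).ncard
      = ∑ S ∈ H.toFinset, ∑ P ∈ (univ : Finset (PGPoint F)),
          if P.1 ≤ S.1 then (solidsThrough H P).ncard else 0 :=
        Finset.sum_congr rfl (fun S _ => Finset.sum_filter _ _)
    _ = ∑ P ∈ (univ : Finset (PGPoint F)), ∑ S ∈ H.toFinset,
          if P.1 ≤ S.1 then (solidsThrough H P).ncard else 0 := Finset.sum_comm
    _ = ∑ P : PGPoint F, (solidsThrough H P).ncard ^ 2 := by
        refine Finset.sum_congr rfl (fun P _ => ?_)
        rw [← Finset.sum_filter, Finset.sum_const, smul_eq_mul, ← nP_eq_filter, sq]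

open scoped Classical in
open Finset in
lemma split_global {q : ℕ} (hq0 : 0 < q) (H : Set (PGSolid F)) (hI : CondI q H)
    (g : ℕ → ℕ) (hg : g 0 = 0) :
    ∑ P : PGPoint F, g (2 * (solidsThrough H P).ncard)
      = g (q^3) * (univ.filter (fun P : PGPoint F => White q H P)).card
        + g (q^3+q^2) * (univ.filter (fun P : PGPoint F => Black q H P)).card := by
  have hdisj : ∀ P : PGPoint F, White q H P → Black q H P → False := by
    intro P hW hB
    rw [White] at hW
    rw [Black] at hB
    have : q^2 = 0 := by omega
    have := pow_pos hq0 2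
    omega
  rw [← Finset.sum_filter_add_sum_filter_not univ (fun P => White q H P)
    (fun P => g (2 * (solidsThrough H P).ncard))]
  congr 1
  · have h1 : ∀ P ∈ univ.filter (fun P : PGPoint F => White q H P),
        g (2 * (solidsThrough H P).ncard) = g (q^3) := by
      intro P hP
      rw [(Finset.mem_filter.1 hP).2]
    rw [Finset.sum_congr rfl h1, Finset.sum_const, smul_eq_mul, mul_comm]
  · rw [← Finset.sum_filter_add_sum_filter_not (univ.filter (fun P : PGPoint F => ¬ White q H P))
      (fun P => Black q H P) (fun P => g (2 * (solidsThrough H P).ncard))]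
    have hb : (univ.filter (fun P : PGPoint F => ¬ White q H P)).filter
        (fun P => Black q H P) = univ.filter (fun P : PGPoint F => Black q H P) := by
      rw [Finset.filter_filter]
      apply Finset.filter_congr
      intro P _
      constructor
      · exact fun h => h.2
      · exact fun h => ⟨fun hw => hdisj P hw h, h⟩
    have h2 : ∀ P ∈ (univ.filter (fun P : PGPoint F => ¬ White q H P)).filter
        (fun P => Black q H P), g (2 * (solidsThrough H P).ncard) = g (q^3+q^2) := by
      intro P hP
      rw [(Finset.mem_filter.1 hP).2]
    have h3 : ∀ P ∈ (univ.filter (fun P : PGPoint F => ¬ White q H P)).filter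
        (fun P => ¬ Black q H P), g (2 * (solidsThrough H P).ncard) = 0 := by
      intro P hP
      have hP1 := Finset.mem_filter.1 hP
      have hP2 := Finset.mem_filter.1 hP1.1
      rcases hI P with h | h | h
      · rw [h, Nat.mul_zero, hg]
      · exact absurd h hP2.2
      · exact absurd h hP1.2
    rw [Finset.sum_congr rfl h2, Finset.sum_congr rfl h3, Finset.sum_const, smul_eq_mul, mul_comm,
      Finset.sum_const_zero, add_zero, hb]

open scoped Classical in
open Finset in
lemma split_solid {q : ℕ} (hq0 : 0 < q) (H : Set (PGSolid F)) (hI : CondI q H)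
    (S₀ : PGSolid F) (hS₀ : S₀ ∈ H) :
    2 * ∑ P ∈ univ.filter (fun P : PGPoint F => P.1 ≤ S₀.1), (solidsThrough H P).ncard
      = q^3 * ((univ.filter (fun P : PGPoint F => P.1 ≤ S₀.1)).filter
            (fun P => White q H P)).card
        + (q^3+q^2) * ((univ.filter (fun P : PGPoint F => P.1 ≤ S₀.1)).filter
            (fun P => Black q H P)).card := by
  have hWB : ∀ P ∈ univ.filter (fun P : PGPoint F => P.1 ≤ S₀.1),
      White q H P ∨ Black q H P := by
    intro P hP
    have hle := (Finset.mem_filter.1 hP).2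
    have hne : (solidsThrough H P).ncard ≠ 0 := by
      have : S₀ ∈ solidsThrough H P := ⟨hS₀, hle⟩
      have := Set.ncard_pos (Set.toFinite _) |>.2 ⟨S₀, this⟩
      omega
    rcases hI P with h | h | h
    · exact absurd h hne
    · exact Or.inl h
    · exact Or.inr h
  rw [Finset.mul_sum]
  rw [← Finset.sum_filter_add_sum_filter_not (univ.filter (fun P : PGPoint F => P.1 ≤ S₀.1))
    (fun P => White q H P) (fun P => 2 * (solidsThrough H P).ncard)]
  congr 1
  · have h1 : ∀ P ∈ (univ.filter (fun P : PGPoint F => P.1 ≤ S₀.1)).filter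
        (fun P => White q H P), 2 * (solidsThrough H P).ncard = q^3 := by
      intro P hP
      exact (Finset.mem_filter.1 hP).2
    rw [Finset.sum_congr rfl h1, Finset.sum_const, smul_eq_mul, mul_comm]
  · have hbeq : (univ.filter (fun P : PGPoint F => P.1 ≤ S₀.1)).filter
        (fun P => ¬ White q H P) = (univ.filter (fun P : PGPoint F => P.1 ≤ S₀.1)).filter
        (fun P => Black q H P) := by
      apply Finset.filter_congr
      intro P hP
      constructor
      · intro hnw
        rcases hWB P hP with h | h
        · exact absurd h hnw
        · exact h
      · intro hb
        intro hw
        rw [White] at hw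
        rw [Black] at hb
        have : q^2 = 0 := by omega
        have := pow_pos hq0 2
        omega
    rw [hbeq]
    have h2 : ∀ P ∈ (univ.filter (fun P : PGPoint F => P.1 ≤ S₀.1)).filter
        (fun P => Black q H P), 2 * (solidsThrough H P).ncard = q^3 + q^2 := by
      intro P hP
      exact (Finset.mem_filter.1 hP).2
    rw [Finset.sum_congr rfl h2, Finset.sum_const, smul_eq_mul, mul_comm]

open scoped Classical in
open Finset in
lemma split_solid_card {q : ℕ} (hq0 : 0 < q) (hcard : Fintype.card F = q)
    (H : Set (PGSolid F)) (hI : CondI q H)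
    (S₀ : PGSolid F) (hS₀ : S₀ ∈ H) :
    ((univ.filter (fun P : PGPoint F => P.1 ≤ S₀.1)).filter (fun P => White q H P)).card
      + ((univ.filter (fun P : PGPoint F => P.1 ≤ S₀.1)).filter (fun P => Black q H P)).card
      = q^3+q^2+q+1 := by
  have hWB : ∀ P ∈ univ.filter (fun P : PGPoint F => P.1 ≤ S₀.1),
      White q H P ∨ Black q H P := by
    intro P hP
    have hle := (Finset.mem_filter.1 hP).2
    have hne : (solidsThrough H P).ncard ≠ 0 := by
      have hm : S₀ ∈ solidsThrough H P := ⟨hS₀, hle⟩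
      have := Set.ncard_pos (Set.toFinite _) |>.2 ⟨S₀, hm⟩
      omega
    rcases hI P with h | h | h
    · exact absurd h hne
    · exact Or.inl h
    · exact Or.inr h
  have hbeq : (univ.filter (fun P : PGPoint F => P.1 ≤ S₀.1)).filter
      (fun P => ¬ White q H P) = (univ.filter (fun P : PGPoint F => P.1 ≤ S₀.1)).filter
      (fun P => Black q H P) := by
    apply Finset.filter_congr
    intro P hP
    constructor
    · intro hnw
      rcases hWB P hP with h | h
      · exact absurd h hnw
      · exact h
    · intro hb hw
      rw [White] at hw
      rw [Black] at hb
      have h0 : q^2 = 0 := by omega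
      have := pow_pos hq0 2
      omega
  rw [← hbeq, Finset.card_filter_add_card_filter_not, ← pts_eq_filter,
    ncard_points4 hcard S₀.1 S₀.2]

open scoped Classical in
open Finset in
lemma blackIn_eq_filter (q : ℕ) (H : Set (PGSolid F)) (W : Submodule F (Fin 5 → F)) :
    (blackIn q H W).ncard = ((univ.filter (fun P : PGPoint F => P.1 ≤ W)).filter
      (fun P => Black q H P)).card := by
  rw [Set.ncard_eq_toFinset_card']
  congr 1
  ext P
  simp only [Set.mem_toFinset, Finset.mem_filter, Finset.mem_univ, true_and]
  constructor
  · exact fun h => ⟨h.2, h.1⟩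
  · exact fun h => ⟨h.2, h.1⟩



lemma arith_bS (q h' wS bS k : ℕ) (hq2 : 2 ≤ q) (hk : h' = k + 1)
    (hh : 2 * h' = q^2 * (q^2 + 1))
    (e3 : 2 * ((q^3+q^2+q+1) + k * (q^2+q+1)) = q^3 * wS + (q^3+q^2) * bS)
    (e4 : wS + bS = q^3+q^2+q+1) :
    bS = (q + 1)^2 := by
  have hQ2 : (2:ℤ) ≤ (q:ℤ) := by exact_mod_cast hq2
  have e3' : (2:ℤ) * (((q:ℤ)^3+q^2+q+1) + k * (q^2+q+1)) = q^3 * wS + (q^3+q^2) * bS := by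
    exact_mod_cast e3
  have e4' : (wS:ℤ) + bS = (q:ℤ)^3+q^2+q+1 := by exact_mod_cast e4
  have hh' : (2:ℤ) * h' = (q:ℤ)^2 * (q^2+1) := by exact_mod_cast hh
  have hk' : (h':ℤ) = k + 1 := by exact_mod_cast hk
  have key : (q:ℤ)^2 * bS = (q:ℤ)^2 * ((q:ℤ)+1)^2 := by
    linear_combination (-1:ℤ) * e3' - (q:ℤ)^3 * e4' + ((q:ℤ)^2+q+1) * hh'
      - 2*((q:ℤ)^2+q+1) * hk'
  have hq0 : ((q:ℤ)^2) ≠ 0 := by positivity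
  have : (bS:ℤ) = ((q:ℤ)+1)^2 := mul_left_cancel₀ hq0 key
  exact_mod_cast this

lemma arith_main (q n w b h' wS bS k : ℕ) (hn : 0 < n) (hqn : q = 2^n) (hk : h' = k + 1)
    (e1 : 2 * (h' * (q^3+q^2+q+1)) = q^3 * w + (q^3+q^2) * b)
    (e2 : 4 * (h' * ((q^3+q^2+q+1) + k * (q^2+q+1))) = q^6 * w + (q^3+q^2)^2 * b)
    (e3 : 2 * ((q^3+q^2+q+1) + k * (q^2+q+1)) = q^3 * wS + (q^3+q^2) * bS)
    (e4 : wS + bS = q^3+q^2+q+1) :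
    2 * h' = q^2 * (q^2 + 1) := by
  have hq2 : 2 ≤ q := by
    subst hqn
    calc 2 = 2^1 := (pow_one 2).symm
    _ ≤ 2^n := Nat.pow_le_pow_right (by norm_num) hn
  have hQ2 : (2:ℤ) ≤ (q:ℤ) := by exact_mod_cast hq2
  have e1' : (2:ℤ) * (h' * ((q:ℤ)^3+q^2+q+1)) = q^3 * w + (q^3+q^2) * b := by exact_mod_cast e1
  have e2' : (4:ℤ) * (h' * (((q:ℤ)^3+q^2+q+1) + k * (q^2+q+1)))
      = (q:ℤ)^6 * w + ((q:ℤ)^3+q^2)^2 * b := by exact_mod_cast e2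
  have e3' : (2:ℤ) * (((q:ℤ)^3+q^2+q+1) + k * (q^2+q+1)) = q^3 * wS + (q^3+q^2) * bS := by
    exact_mod_cast e3
  have e4' : (wS:ℤ) + bS = (q:ℤ)^3+q^2+q+1 := by exact_mod_cast e4
  have hk' : (h':ℤ) = k + 1 := by exact_mod_cast hk
  -- E3: per-solid equation rearranged
  have E3' : (2:ℤ)*((q:ℤ)^3+q^2+q+1) + 2*k*((q:ℤ)^2+q+1)
      = (q:ℤ)^3*((q:ℤ)^3+q^2+q+1) + (q:ℤ)^2*bS := by
    linear_combination e3' + (q:ℤ)^3 * e4'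
  -- Step A : q^2 ∣ 2 h'
  have hA : (2:ℤ)*(((q:ℤ)+1)*h')
      = (q:ℤ)^2*((q:ℤ)*((q:ℤ)^3+q^2+q+1) + bS - 2*q - 2 - 2*k) := by
    linear_combination E3' + 2*((q:ℤ)+1)*hk'
  have hdvdA : (q^2 : ℕ) ∣ 2*((q+1)*h') := by
    have : ((q^2 : ℕ) : ℤ) ∣ ((2*((q+1)*h') : ℕ) : ℤ) := by
      refine ⟨(q:ℤ)*((q:ℤ)^3+q^2+q+1) + bS - 2*q - 2 - 2*k, ?_⟩
      push_cast
      linear_combination hA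
    exact_mod_cast this
  have hcop : Nat.Coprime (q^2) (q+1) := Nat.Coprime.pow_left _ (by simp)
  have hdvd : q^2 ∣ 2*h' := by
    refine hcop.dvd_of_dvd_mul_right ?_
    have : 2*((q+1)*h') = 2*h'*(q+1) := by ring
    rwa [this] at hdvdA
  obtain ⟨h, hh⟩ := hdvd
  have hh0 : 1 ≤ h := by
    rcases Nat.eq_zero_or_pos h with rfl | hp
    · simp at hh; omega
    · exact hp
  have hh' : (2:ℤ) * h' = (q:ℤ)^2 * h := by exact_mod_cast hh
  -- black points per solid: bS = h*(q^2+q+1) - q*(q^3+q^2+q-1)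
  have S6 : (q:ℤ)^2*bS = (q:ℤ)^2*((h:ℤ)*((q:ℤ)^2+q+1)) - (q:ℤ)^3*((q:ℤ)^3+q^2+q-1) := by
    linear_combination (-1:ℤ)*E3' + ((q:ℤ)^2+q+1)*hh' - 2*((q:ℤ)^2+q+1)*hk'
  have S6e : (bS:ℤ) = (h:ℤ)*((q:ℤ)^2+q+1) - (q:ℤ)*((q:ℤ)^3+q^2+q-1) := by
    have hq0 : ((q:ℤ)^2) ≠ 0 := by positivity
    refine mul_left_cancel₀ hq0 ?_
    linear_combination S6
  -- relation (q+1) b = h bS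
  have S2 : (q:ℤ)^4*(((q:ℤ)+1)*b) = (q:ℤ)^4*((h:ℤ)*bS) := by
    linear_combination (-1:ℤ)*e2' + (q:ℤ)^3*e1' + 2*(h':ℤ)*E3' + (q:ℤ)^2*(bS:ℤ)*hh'
  have S3 : ((q:ℤ)+1)*b = (h:ℤ)*bS := by
    have hq0 : ((q:ℤ)^4) ≠ 0 := by positivity
    exact mul_left_cancel₀ hq0 S2
  -- relation q w = h wS
  have S4 : (2:ℤ)*(q:ℤ)^4*((q:ℤ)*w) = 2*(q:ℤ)^4*((h:ℤ)*wS) := by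
    linear_combination (-2:ℤ)*((q:ℤ)^3+(q:ℤ)^2)*e1' + 2*e2' - 4*(h':ℤ)*E3'
      - 4*(h':ℤ)*(q:ℤ)^2*e4' + 2*(q:ℤ)^2*(wS:ℤ)*hh'
  have S5 : (q:ℤ)*w = (h:ℤ)*wS := by
    have hq0 : ((2:ℤ)*(q:ℤ)^4) ≠ 0 := by positivity
    exact mul_left_cancel₀ hq0 S4
  -- bounds
  have hBS0 : (0:ℤ) ≤ (bS:ℤ) := Int.natCast_nonneg _
  have hWS0 : (0:ℤ) ≤ (wS:ℤ) := Int.natCast_nonneg _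
  have hge : ((q:ℤ))^2 ≤ (h:ℤ) := by
    by_contra hcon
    push_neg at hcon
    have hle1 : (h:ℤ) ≤ (q:ℤ)^2 - 1 := by omega
    have hp1 : (0:ℤ) ≤ (q:ℤ)^2+q+1 := by positivity
    have hprod := mul_le_mul_of_nonneg_right hle1 hp1
    have hsq : (0:ℤ) ≤ (q:ℤ)^2 := by positivity
    linarith only [S6e, hBS0, hQ2, hprod, hsq]
  have hle : (h:ℤ) ≤ (q:ℤ)^2 + q - 1 := by
    by_contra hcon
    push_neg at hcon
    have hge1 : ((q:ℤ)^2 + q) ≤ (h:ℤ) := by omega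
    have hp1 : (0:ℤ) ≤ (q:ℤ)^2+q+1 := by positivity
    have hprod := mul_le_mul_of_nonneg_right hge1 hp1
    linarith only [S6e, hWS0, hQ2, hprod, e4', hBS0]
  -- q ∣ h (h-1)
  have S8 : (h:ℤ)^2 - h
      = (q:ℤ)*((h:ℤ)*((q:ℤ)^3+q^2+q-1) + h*((q:ℤ)^2+q+1) - (h:ℤ)^2*((q:ℤ)+1) - w) := by
    linear_combination S5 + (h:ℤ)*e4' - (h:ℤ)*S6e
  have hdvdq : q ∣ h * (h-1) := by
    have hz : ((q:ℕ):ℤ) ∣ ((h*(h-1) : ℕ) : ℤ) := by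
      refine ⟨(h:ℤ)*((q:ℤ)^3+q^2+q-1) + h*((q:ℤ)^2+q+1) - (h:ℤ)^2*((q:ℤ)+1) - w, ?_⟩
      push_cast [Nat.cast_sub hh0]
      linear_combination S8
    exact_mod_cast hz
  -- (q+1) ∣ h (h-2) in ℤ
  have S10 : (h:ℤ)*((h:ℤ)-2) = ((q:ℤ)+1)*((b:ℤ) - (h:ℤ)*((h:ℤ)*q - ((q:ℤ)^3+q-2))) := by
    linear_combination (-1:ℤ)*S3 - (h:ℤ)*S6e
  -- parity: q ∣ h or q ∣ h - 1
  have hsplit : q ∣ h ∨ q ∣ (h-1) := by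
    rcases Nat.even_or_odd h with he | ho
    · left
      have hodd : Odd (h-1) := by
        rcases he with ⟨m, rfl⟩
        have : 1 ≤ m := by omega
        exact ⟨m-1, by omega⟩
      have hcop2 : Nat.Coprime q (h-1) := by
        subst hqn
        exact Nat.Coprime.pow_left _ (Nat.coprime_two_left.2 hodd)
      exact hcop2.dvd_of_dvd_mul_right hdvdq
    · right
      have hcop2 : Nat.Coprime q h := by
        subst hqn
        exact Nat.Coprime.pow_left _ (Nat.coprime_two_left.2 ho)
      exact hcop2.dvd_of_dvd_mul_left hdvdq
  have hq0Z : (0:ℤ) < (q:ℤ) := by linarith only [hQ2]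
  -- conclude h = q^2 + 1
  have hval : (h:ℤ) = (q:ℤ)^2 + 1 := by
    rcases hsplit with ⟨m0, hm0⟩ | ⟨m0, hm0⟩
    · -- h = q * m0 : show m0 = q, then contradiction via S10
      exfalso
      have hmZ : (h:ℤ) = (q:ℤ) * m0 := by exact_mod_cast hm0
      have hq1 : (q:ℤ) ≤ m0 := by
        refine le_of_mul_le_mul_left ?_ hq0Z
        calc (q:ℤ) * q = (q:ℤ)^2 := by ring
          _ ≤ (h:ℤ) := hge
          _ = (q:ℤ) * m0 := hmZ
      have hq2' : (m0:ℤ) < (q:ℤ) + 1 := by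
        refine lt_of_mul_lt_mul_left ?_ hq0Z.le
        calc (q:ℤ) * m0 = (h:ℤ) := hmZ.symm
          _ ≤ (q:ℤ)^2 + q - 1 := hle
          _ < (q:ℤ) * ((q:ℤ)+1) := by
              have hx : (q:ℤ)*((q:ℤ)+1) = (q:ℤ)^2 + q := by ring
              linarith only [hx, hQ2]
      have hm0q : (m0:ℤ) = (q:ℤ) := by omega
      have hcast : (h:ℤ) = (q:ℤ)^2 := by rw [hmZ, hm0q]; ring
      have hd1 : ((q:ℤ)+1) ∣ (h:ℤ)*((h:ℤ)-2) := ⟨_, S10⟩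
      have hd2 : ((q:ℤ)+1) ∣ ((q:ℤ)^2-1)^2 := ⟨((q:ℤ)-1)*((q:ℤ)^2-1), by ring⟩
      have hd3 : ((q:ℤ)+1) ∣ 1 := by
        have hone : ((q:ℤ)^2-1)^2 - (h:ℤ)*((h:ℤ)-2) = 1 := by rw [hcast]; ring
        calc ((q:ℤ)+1) ∣ ((q:ℤ)^2-1)^2 - (h:ℤ)*((h:ℤ)-2) := dvd_sub hd2 hd1
          _ = 1 := hone
      have := Int.le_of_dvd one_pos hd3
      omega
    · -- h - 1 = q * m0
      have hmZ : (h:ℤ) = (q:ℤ) * m0 + 1 := by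
        have : ((h - 1 : ℕ) : ℤ) = (q:ℤ) * m0 := by exact_mod_cast hm0
        rw [Nat.cast_sub hh0] at this
        omega
      have hq1 : (q:ℤ) ≤ m0 := by
        by_contra hc
        push_neg at hc
        have hle1 : (m0:ℤ) ≤ (q:ℤ) - 1 := by omega
        have hprod := mul_le_mul_of_nonneg_left hle1 hq0Z.le
        have hx : (q:ℤ)*((q:ℤ)-1) = (q:ℤ)^2 - q := by ring
        linarith only [hge, hmZ, hQ2, hprod, hx]
      have hq2' : (m0:ℤ) ≤ (q:ℤ) := by
        by_contra hc
        push_neg at hc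
        have hge1 : (q:ℤ) + 1 ≤ (m0:ℤ) := by omega
        have hprod := mul_le_mul_of_nonneg_left hge1 hq0Z.le
        have hx : (q:ℤ)*((q:ℤ)+1) = (q:ℤ)^2 + q := by ring
        linarith only [hle, hmZ, hprod, hx]
      have hm0q : (m0:ℤ) = (q:ℤ) := by omega
      rw [hmZ, hm0q]; ring
  have hvalN : h = q^2 + 1 := by exact_mod_cast hval
  rw [hh, hvalN]

theorem stmt2 (q : ℕ) (hq : ∃ n : ℕ, 0 < n ∧ q = 2 ^ n)
    (F : Type*) [Field F] [Fintype F] (hcard : Fintype.card F = q)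
    (H : Set (PGSolid F)) (hne : H.Nonempty) (hI : CondI q H) :
    (∀ S ∈ H, (blackIn q H S.1).ncard = (q + 1) ^ 2) ∧
    2 * H.ncard = q ^ 2 * (q ^ 2 + 1) := by
  classical
  obtain ⟨n, hn, hqn⟩ := hq
  obtain ⟨S₀, hS₀⟩ := hne
  have hq2 : 2 ≤ q := hcard ▸ Fintype.one_lt_card
  have hq0 : 0 < q := by omega
  have hh1 : 1 ≤ H.ncard := (Set.ncard_pos (Set.toFinite H)).2 ⟨S₀, hS₀⟩
  set k := H.ncard - 1 with hkdef
  have hk : H.ncard = k + 1 := by omega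
  -- global first moment
  have hE1 : ∑ P : PGPoint F, (solidsThrough H P).ncard
      = H.ncard * (q^3+q^2+q+1) := geom_E1 hcard H
  -- per-solid sums
  have hE3 : ∀ S : PGSolid F, S ∈ H →
      ∑ P ∈ Finset.univ.filter (fun P : PGPoint F => P.1 ≤ S.1), (solidsThrough H P).ncard
      = (q^3+q^2+q+1) + k * (q^2+q+1) := by
    intro S hS
    rw [geom_E3 hcard H S hS]
  -- second moment
  have hE2 : ∑ P : PGPoint F, (solidsThrough H P).ncard ^ 2
      = H.ncard * ((q^3+q^2+q+1) + k * (q^2+q+1)) := by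
    rw [← geom_E2 H]
    have hc : ∀ S ∈ H.toFinset,
        ∑ P ∈ Finset.univ.filter (fun P : PGPoint F => P.1 ≤ S.1), (solidsThrough H P).ncard
        = (q^3+q^2+q+1) + k * (q^2+q+1) := fun S hS => hE3 S (Set.mem_toFinset.1 hS)
    rw [Finset.sum_congr rfl hc, Finset.sum_const, smul_eq_mul, ← Set.ncard_eq_toFinset_card']
  -- global color counts
  set w := (Finset.univ.filter (fun P : PGPoint F => White q H P)).card with hwdef
  set b := (Finset.univ.filter (fun P : PGPoint F => Black q H P)).card with hbdef
  have e1 : 2 * (H.ncard * (q^3+q^2+q+1)) = q^3 * w + (q^3+q^2) * b := by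
    have hid := split_global hq0 H hI (fun x => x) rfl
    calc 2 * (H.ncard * (q^3+q^2+q+1)) = 2 * ∑ P : PGPoint F, (solidsThrough H P).ncard := by
          rw [hE1]
      _ = ∑ P : PGPoint F, 2 * (solidsThrough H P).ncard := by rw [Finset.mul_sum]
      _ = q^3 * w + (q^3+q^2) * b := hid
  have e2 : 4 * (H.ncard * ((q^3+q^2+q+1) + k * (q^2+q+1)))
      = q^6 * w + (q^3+q^2)^2 * b := by
    have hsq := split_global hq0 H hI (fun x => x^2) (by norm_num)
    have hstep : ∑ P : PGPoint F, (2 * (solidsThrough H P).ncard)^2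
        = 4 * ∑ P : PGPoint F, (solidsThrough H P).ncard ^ 2 := by
      rw [Finset.mul_sum]
      refine Finset.sum_congr rfl (fun P _ => ?_)
      ring
    calc 4 * (H.ncard * ((q^3+q^2+q+1) + k * (q^2+q+1)))
        = 4 * ∑ P : PGPoint F, (solidsThrough H P).ncard ^ 2 := by rw [hE2]
      _ = ∑ P : PGPoint F, (2 * (solidsThrough H P).ncard)^2 := hstep.symm
      _ = (q^3)^2 * w + (q^3+q^2)^2 * b := hsq
      _ = q^6 * w + (q^3+q^2)^2 * b := by ring
  -- per-solid color equations
  have solidEqs : ∀ S : PGSolid F, S ∈ H →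
      ∃ wS bS : ℕ,
        2 * ((q^3+q^2+q+1) + k * (q^2+q+1)) = q^3 * wS + (q^3+q^2) * bS ∧
        wS + bS = q^3+q^2+q+1 ∧
        (blackIn q H S.1).ncard = bS := by
    intro S hS
    refine ⟨((Finset.univ.filter (fun P : PGPoint F => P.1 ≤ S.1)).filter
        (fun P => White q H P)).card,
      ((Finset.univ.filter (fun P : PGPoint F => P.1 ≤ S.1)).filter
        (fun P => Black q H P)).card, ?_, ?_, ?_⟩
    · rw [← hE3 S hS]
      exact split_solid hq0 H hI S hS
    · exact split_solid_card hq0 hcard H hI S hS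
    · exact blackIn_eq_filter q H S.1
  obtain ⟨wS0, bS0, he3, he4, -⟩ := solidEqs S₀ hS₀
  have hmain : 2 * H.ncard = q^2 * (q^2 + 1) :=
    arith_main q n w b H.ncard wS0 bS0 k hn hqn hk e1 e2 he3 he4
  refine ⟨?_, hmain⟩
  intro S hS
  obtain ⟨wS, bS, he3', he4', hbeq⟩ := solidEqs S hS
  rw [hbeq]
  exact arith_bS q H.ncard wS bS k hq2 hk hmain he3' he4'
end

section
/- Under hypothesis (I), for a plane π of PG(4,q) (q even) not containing the red point, if x is the number of black points in π and s is the number of solids of H containing π, then x = 2s+1. -/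
open Submodule Set

variable {F : Type*} [Field F]

/-! ### Auxiliary material -/

noncomputable instance PGPoint.fintype [Fintype F] : Fintype (PGPoint F) := Fintype.ofFinite _
noncomputable instance PGSolid.fintype [Fintype F] : Fintype (PGSolid F) := Fintype.ofFinite _

lemma aux_finrank_total : Module.finrank F (Fin 5 → F) = 5 := by
  simp [Module.finrank_pi]

/-- Number of projective points in a subspace of finrank `d` : `(q^d - 1)/(q-1)`. -/
lemma aux_ptsF_card [Fintype F] (W : Submodule F (Fin 5 → F))
    [DecidablePred (fun P : PGPoint F => P.1 ≤ W)] :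
    (Finset.univ.filter (fun P : PGPoint F => P.1 ≤ W)).card * (Fintype.card F - 1)
      = Fintype.card F ^ (Module.finrank F W) - 1 := by
  classical
  set q := Fintype.card F with hq
  have card_sub : ∀ (U : Submodule F (Fin 5 → F)),
      (Finset.univ.filter (fun v => v ∈ U)).card = q ^ (Module.finrank F U) := by
    intro U
    have h0 : Fintype.card ↥U = q ^ (Module.finrank F U) := Module.card_eq_pow_finrank
    rw [← Fintype.card_subtype]
    exact (Fintype.card_congr (Equiv.refl _)).trans h0
  set s : Finset (Fin 5 → F) := Finset.univ.filter (fun v => v ∈ W ∧ v ≠ 0) with hs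
  have hscard : s.card = q ^ (Module.finrank F W) - 1 := by
    have h1 : s = (Finset.univ.filter (fun v => v ∈ W)).erase 0 := by
      ext v
      simp only [hs, Finset.mem_filter, Finset.mem_erase, Finset.mem_univ, true_and]
      tauto
    rw [h1, Finset.card_erase_of_mem (by simp [W.zero_mem]), card_sub W]
  have hone : (fun _ => (1:F) : Fin 5 → F) ≠ 0 := by
    intro h; have := congrFun h 0; simp at this
  let P₀ : PGPoint F := ⟨Submodule.span F {(fun _ => (1:F))}, finrank_span_singleton hone⟩
  let f : (Fin 5 → F) → PGPoint F := fun v =>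
    if h : v ≠ 0 then ⟨Submodule.span F {v}, finrank_span_singleton h⟩ else P₀
  have hmem : ∀ v ∈ s, f v ∈ Finset.univ.filter (fun P : PGPoint F => P.1 ≤ W) := by
    intro v hv
    simp only [hs, Finset.mem_filter] at hv
    simp only [f, dif_pos hv.2.2, Finset.mem_filter, Finset.mem_univ, true_and]
    exact Submodule.span_le.2 (by simpa using hv.2.1)
  rw [Finset.card_eq_sum_card_fiberwise hmem] at hscard
  have hfib : ∀ P ∈ Finset.univ.filter (fun P : PGPoint F => P.1 ≤ W),
      (s.filter (fun v => f v = P)).card = q - 1 := by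
    intro P hP
    simp only [Finset.mem_filter, Finset.mem_univ, true_and] at hP
    have h1 : s.filter (fun v => f v = P)
        = (Finset.univ.filter (fun v => v ∈ P.1)).erase 0 := by
      ext v
      simp only [hs, Finset.mem_filter, Finset.mem_erase, Finset.mem_univ, true_and,
        Finset.filter_filter]
      constructor
      · rintro ⟨⟨hvW, hv0⟩, hfv⟩
        refine ⟨hv0, ?_⟩
        simp only [f, dif_pos hv0] at hfv
        rw [← hfv]
        exact Submodule.mem_span_singleton_self v
      · rintro ⟨hv0, hvP⟩
        refine ⟨⟨hP hvP, hv0⟩, ?_⟩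
        simp only [f, dif_pos hv0]
        apply Subtype.ext
        have hle : Submodule.span F {v} ≤ P.1 := Submodule.span_le.2 (by simpa using hvP)
        exact Submodule.eq_of_le_of_finrank_eq hle (by rw [finrank_span_singleton hv0, P.2])
    have h2 := card_sub P.1
    rw [P.2, pow_one] at h2
    rw [h1, Finset.card_erase_of_mem (by simp [P.1.zero_mem]), h2]
  rw [Finset.sum_congr rfl hfib, Finset.sum_const, smul_eq_mul] at hscard
  omega

lemma aux_ptsF_card_eq [Fintype F] {q : ℕ} (hc : Fintype.card F = q) (hq2 : 2 ≤ q)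
    (W : Submodule F (Fin 5 → F)) [DecidablePred (fun P : PGPoint F => P.1 ≤ W)]
    {d θ : ℕ} (hW : Module.finrank F W = d) (hθ : θ * (q-1) = q^d - 1) :
    (Finset.univ.filter (fun P : PGPoint F => P.1 ≤ W)).card = θ := by
  have h := aux_ptsF_card W
  rw [hc, hW] at h
  exact Nat.eq_of_mul_eq_mul_right (by omega) (h.trans hθ.symm)

lemma aux_theta2 {q : ℕ} (hq2 : 2 ≤ q) : (q+1) * (q-1) = q^2 - 1 := by
  have h1 : 1 ≤ q := by omega
  have h2 : 1 ≤ q^2 := Nat.one_le_pow _ _ (by omega)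
  zify [h1, h2]; ring

lemma aux_theta3 {q : ℕ} (hq2 : 2 ≤ q) : (q^2+q+1) * (q-1) = q^3 - 1 := by
  have h1 : 1 ≤ q := by omega
  have h2 : 1 ≤ q^3 := Nat.one_le_pow _ _ (by omega)
  zify [h1, h2]; ring

lemma aux_theta4 {q : ℕ} (hq2 : 2 ≤ q) : (q^3+q^2+q+1) * (q-1) = q^4 - 1 := by
  have h1 : 1 ≤ q := by omega
  have h2 : 1 ≤ q^4 := Nat.one_le_pow _ _ (by omega)
  zify [h1, h2]; ring

lemma aux_finrank_inf_solids (S T : PGSolid F) (h : S ≠ T) :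
    Module.finrank F ↥(S.1 ⊓ T.1) = 3 := by
  have h5 : Module.finrank F (Fin 5 → F) = 5 := aux_finrank_total
  have hne : S.1 ≠ T.1 := fun he => h (Subtype.ext he)
  have hlt : S.1 < S.1 ⊔ T.1 := by
    refine lt_of_le_of_ne le_sup_left (fun he => hne ?_)
    have hT : T.1 ≤ S.1 := by rw [he]; exact le_sup_right
    exact (Submodule.eq_of_le_of_finrank_eq hT (by rw [S.2, T.2])).symm
  have h45 : Module.finrank F ↥(S.1 ⊔ T.1) = 5 := by
    have hlt' := Submodule.finrank_lt_finrank_of_lt hlt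
    have hle := Submodule.finrank_le (S.1 ⊔ T.1)
    rw [h5] at hle; rw [S.2] at hlt'; omega
  have hsum := Submodule.finrank_sup_add_finrank_inf_eq S.1 T.1
  rw [h45, S.2, T.2] at hsum; omega

lemma aux_finrank_inf_plane (π : PGPlane F) (S : PGSolid F) (h : ¬ π.1 ≤ S.1) :
    Module.finrank F ↥(π.1 ⊓ S.1) = 2 := by
  have h5 : Module.finrank F (Fin 5 → F) = 5 := aux_finrank_total
  have hlt : S.1 < π.1 ⊔ S.1 := by
    refine lt_of_le_of_ne le_sup_right (fun he => h ?_)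
    rw [he]; exact le_sup_left
  have h45 : Module.finrank F ↥(π.1 ⊔ S.1) = 5 := by
    have hlt' := Submodule.finrank_lt_finrank_of_lt hlt
    have hle := Submodule.finrank_le (π.1 ⊔ S.1)
    rw [h5] at hle; rw [S.2] at hlt'; omega
  have hsum := Submodule.finrank_sup_add_finrank_inf_eq π.1 S.1
  rw [h45, π.2, S.2] at hsum; omega

lemma aux_sum_swap {α β : Type*} (A : Finset α) (B : Finset β) (r : α → β → Prop)
    [∀ a b, Decidable (r a b)] :
    ∑ a ∈ A, (B.filter (fun b => r a b)).card = ∑ b ∈ B, (A.filter (fun a => r a b)).card := by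
  simp only [Finset.card_filter]
  exact Finset.sum_comm

set_option maxHeartbeats 1000000 in
lemma arith_core (q h w b : ℕ) (hq : ∃ n : ℕ, 0 < n ∧ q = 2 ^ n) (hh : 1 ≤ h)
    (e1 : 2*h*(q^3+q^2+q+1) = w*q^3 + b*(q^3+q^2))
    (e2 : 4*(h*h - h)*(q^2+q+1) + 2*(2*h*(q^3+q^2+q+1)) = w*q^6 + b*(q^3+q^2)^2) :
    2*h = q^4 + q^2 := by
  obtain ⟨n, hn, hqn⟩ := hq
  have hq2 : 2 ≤ q := by
    rw [hqn]; calc 2 = 2^1 := (pow_one 2).symm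
    _ ≤ 2^n := Nat.pow_le_pow_right (by norm_num) hn
  have hq0 : 0 < q := by omega
  -- q^2 divides 2h
  have hcop : Nat.Coprime (q^2) (q^3+q^2+q+1) := by
    have h1 : Nat.Coprime q (q^3+q^2+q+1) := by
      have : q^3+q^2+q+1 = 1 + (q^2+q+1)*q := by ring
      rw [this, Nat.coprime_add_mul_right_right]
      exact Nat.coprime_one_right q
    exact h1.pow_left 2
  have hdvd : q^2 ∣ 2*h := by
    refine hcop.dvd_of_dvd_mul_right ?_
    rw [e1]; exact ⟨w*q + b*(q+1), by ring⟩
  obtain ⟨v, hv⟩ := hdvd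
  have hv0 : 0 < v := by
    rcases Nat.eq_zero_or_pos v with h0 | h0
    · rw [h0, Nat.mul_zero] at hv; omega
    · exact h0
  -- integer versions
  have e1' : 2*(h:ℤ)*(q^3+q^2+q+1) = w*q^3 + b*(q^3+q^2) := by exact_mod_cast e1
  have hle : h ≤ h*h := Nat.le_mul_of_pos_left h hh
  have e2' : 4*((h:ℤ)*h - h)*(q^2+q+1) + 2*(2*h*(q^3+q^2+q+1)) = w*q^6 + b*(q^3+q^2)^2 := by
    have := e2; zify [hle] at this; exact this
  have hv' : 2*(h:ℤ) = q^2*v := by exact_mod_cast hv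
  have hqz : (q:ℤ) ≠ 0 := by exact_mod_cast hq0.ne'
  -- starw : v*θ4 = w*q + b*(q+1)
  have starw : v*(q^3+q^2+q+1) = w*q + b*(q+1) := by
    have key : (q:ℤ)^2*((v:ℤ)*(q^3+q^2+q+1)) = (q:ℤ)^2*((w:ℤ)*q + b*(q+1)) := by
      linear_combination e1' - ((q:ℤ)^3+q^2+q+1)*hv'
    have := mul_left_cancel₀ (pow_ne_zero 2 hqz) key
    exact_mod_cast this
  -- starstar : v*v*θ3 + v*q = v*q*(q^3+q^2+q) + b*(q+1)
  have starstar : v*v*(q^2+q+1) + v*q = v*q*(q^3+q^2+q) + b*(q+1) := by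
    have key : (q:ℤ)^4*((v:ℤ)*v*(q^2+q+1) + v*q)
        = (q:ℤ)^4*((v:ℤ)*q*(q^3+q^2+q) + b*(q+1)) := by
      linear_combination e2' - (q:ℤ)^3*e1'
        - (((q:ℤ)^2+q+1)*(2*(h:ℤ)+q^2*v) + 2*q^3 - q^3*((q:ℤ)^3+q^2+q+1))*hv'
    have := mul_left_cancel₀ (pow_ne_zero 4 hqz) key
    exact_mod_cast this
  -- upper bound for v
  have ble : b*(q+1) ≤ v*(q^3+q^2+q+1) := starw ▸ Nat.le_add_left _ _
  have vub : v ≤ q^2 + q - 1 := by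
    by_contra hc
    push_neg at hc
    have hge : q^2 + q ≤ v := by omega
    have h1 : v*v*(q^2+q+1) + v*q ≤ v*q*(q^3+q^2+q) + v*(q^3+q^2+q+1) := by
      rw [starstar]; exact Nat.add_le_add_left ble _
    have h2 : v * (v*(q^2+q+1) + q) ≤ v * (q*(q^3+q^2+q) + (q^3+q^2+q+1)) := by
      calc v * (v*(q^2+q+1) + q) = v*v*(q^2+q+1) + v*q := by ring
      _ ≤ v*q*(q^3+q^2+q) + v*(q^3+q^2+q+1) := h1
      _ = v * (q*(q^3+q^2+q) + (q^3+q^2+q+1)) := by ring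
    have h3 : v*(q^2+q+1) + q ≤ q*(q^3+q^2+q) + (q^3+q^2+q+1) :=
      Nat.le_of_mul_le_mul_left h2 hv0
    have h4 : (q^2+q)*(q^2+q+1) ≤ v*(q^2+q+1) := Nat.mul_le_mul_right _ hge
    nlinarith [h3, h4, hq2]
  -- lower bound for v
  have vlb : q^2 ≤ v := by
    by_contra hc
    push_neg at hc
    have h1 : v*q*(q^3+q^2+q) ≤ v*v*(q^2+q+1) + v*q := by
      rw [starstar]; exact Nat.le_add_right _ _
    have h2 : v*(q*(q^3+q^2+q)) ≤ v*(v*(q^2+q+1) + q) := by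
      calc v*(q*(q^3+q^2+q)) = v*q*(q^3+q^2+q) := by ring
      _ ≤ v*v*(q^2+q+1) + v*q := h1
      _ = v*(v*(q^2+q+1) + q) := by ring
    have h3 : q*(q^3+q^2+q) ≤ v*(q^2+q+1) + q := Nat.le_of_mul_le_mul_left h2 hv0
    have hsucc : v + 1 ≤ q^2 := Nat.succ_le_of_lt hc
    have h4 : (v+1)*(q^2+q+1) ≤ q^2*(q^2+q+1) := Nat.mul_le_mul_right _ hsucc
    nlinarith [h3, h4, hq2]
  -- set t
  have hvt : v = q^2 + (v - q^2) := by omega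
  set t := v - q^2 with hts
  have htub : t ≤ q - 1 := by omega
  -- q divides v*v - v  (in ℤ)
  have starw' : (v:ℤ)*(q^3+q^2+q+1) = w*q + b*(q+1) := by exact_mod_cast starw
  have starstar' : (v:ℤ)*v*(q^2+q+1) + v*q = v*q*(q^3+q^2+q) + b*(q+1) := by
    exact_mod_cast starstar
  have d1 : (q:ℤ) ∣ (v:ℤ) - b :=
    ⟨(w:ℤ) + b - v*(q^2+q+1), by linear_combination starw'⟩
  have d2 : (q:ℤ) ∣ (v:ℤ)*v - b :=
    ⟨-(v:ℤ)*v*(q+1) + v*(q^3+q^2+q) - v + b, by linear_combination starstar'⟩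
  have hvt' : (v:ℤ) = (q:ℤ)^2 + t := by exact_mod_cast hvt
  have d3 : (q:ℤ) ∣ (t:ℤ)*t - t := by
    have heq : (t:ℤ)*t - t = ((v:ℤ)*v - b) - ((v:ℤ) - b) - q*((q:ℤ)^3 + 2*q*t - q) := by
      rw [hvt']; ring
    rw [heq]
    exact dvd_sub (dvd_sub d2 d1) (dvd_mul_right _ _)
  -- case analysis on t
  rcases t_cases : t with _ | _ | t2
  · -- t = 0 : contradiction, b*(q+1) = q^3
    exfalso
    have hvq : (v:ℤ) = (q:ℤ)^2 := by
      rw [hvt']; rw [t_cases]; push_cast; ring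
    have hbq : (b:ℤ)*(q+1) = q^3 := by
      linear_combination -starstar'
        + (((q:ℤ)^2+q+1)*((v:ℤ)+q^2) - q*(q^3+q^2+q) + q)*hvq
    have hbqn : b*(q+1) = q^3 := by exact_mod_cast hbq
    have hdq : (q+1) ∣ q^3 := Dvd.intro_left b hbqn
    have hco : Nat.Coprime (q+1) (q^3) := (show Nat.Coprime (q+1) q by simp).pow_right 3
    have := hco.eq_one_of_dvd hdq
    omega
  · -- t = 1 : v = q^2 + 1
    have : v = q^2 + 1 := by omega
    rw [hv, this]; ring
  · -- t ≥ 2 : contradiction via parity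
    exfalso
    have ht2 : 2 ≤ t := by omega
    have hdt : q ∣ t*(t-1) := by
      have h1 : ((t*(t-1) : ℕ) : ℤ) = (t:ℤ)*t - t := by
        push_cast [Nat.cast_sub (by omega : 1 ≤ t)]; ring
      have := d3; rw [← h1] at this
      exact_mod_cast this
    rcases Nat.even_or_odd t with he | ho
    · have hodd : Odd (t-1) := Nat.Even.sub_odd (by omega) he odd_one
      have hco : Nat.Coprime q (t-1) := by
        rw [hqn]
        exact Nat.Coprime.pow_left n (Nat.coprime_two_left.mpr hodd)
      have : q ∣ t := (Nat.Coprime.dvd_of_dvd_mul_right hco hdt)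
      have := Nat.le_of_dvd (by omega) this
      omega
    · have hco : Nat.Coprime q t := by
        rw [hqn]
        exact Nat.Coprime.pow_left n (Nat.coprime_two_left.mpr ho)
      have : q ∣ (t-1) := by
        have hdt' : q ∣ (t-1)*t := by rwa [Nat.mul_comm] at hdt
        exact Nat.Coprime.dvd_of_dvd_mul_right hco hdt'
      have := Nat.le_of_dvd (by omega) this
      omega

set_option maxHeartbeats 2000000 in
theorem stmt8 (q : ℕ) (hq : ∃ n : ℕ, 0 < n ∧ q = 2 ^ n)
    (F : Type*) [Field F] [Fintype F] (hcard : Fintype.card F = q)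
    (H : Set (PGSolid F)) (hne : H.Nonempty) (hI : CondI q H)
    (π : PGPlane F) (hπ : ∀ P : PGPoint F, Red H P → ¬ P.1 ≤ π.1)
    (x s : ℕ) (hx : x = (blackIn q H π.1).ncard)
    (hs : s = {S ∈ H | π.1 ≤ S.1}.ncard) :
    x = 2 * s + 1 := by
  classical
  have hq2 : 2 ≤ q := by
    obtain ⟨n, hn, rfl⟩ := hq
    calc 2 = 2^1 := (pow_one 2).symm
    _ ≤ 2^n := Nat.pow_le_pow_right (by norm_num) hn
  set HF : Finset (PGSolid F) := H.toFinset with hHF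
  set h : ℕ := HF.card with hh
  set nP : PGPoint F → ℕ := fun P => (HF.filter (fun S => P.1 ≤ S.1)).card with hnP
  -- link between ncard and nP
  have link : ∀ P : PGPoint F, (solidsThrough H P).ncard = nP P := by
    intro P
    have hset : solidsThrough H P = ↑(HF.filter (fun S => P.1 ≤ S.1)) := by
      ext S
      simp [solidsThrough, hHF]
    rw [hset, Set.ncard_coe_finset]
  -- trichotomy
  have tri : ∀ P : PGPoint F, nP P = 0 ∨ 2 * nP P = q^3 ∨ 2 * nP P = q^3+q^2 := by
    intro P
    have := hI P
    rw [link P] at this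
    exact this
  have hq3ne : ¬ (q^3 = q^3 + q^2) := by
    have : 0 < q^2 := Nat.pow_pos (by omega)
    omega
  -- black and white point counts
  set b : ℕ := (Finset.univ.filter (fun P : PGPoint F => 2 * nP P = q^3+q^2)).card with hb
  set w : ℕ := (Finset.univ.filter (fun P : PGPoint F => 2 * nP P = q^3)).card with hw
  -- generic trichotomy sum
  have hsum : ∀ g : ℕ → ℕ, g 0 = 0 →
      ∑ P : PGPoint F, g (2 * nP P) = b * g (q^3+q^2) + w * g (q^3) := by
    intro g hg0
    rw [← Finset.sum_filter_add_sum_filter_not Finset.univ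
      (fun P : PGPoint F => 2 * nP P = q^3+q^2)]
    have hB : ∑ P ∈ Finset.univ.filter (fun P : PGPoint F => 2 * nP P = q^3+q^2),
        g (2 * nP P) = b * g (q^3+q^2) := by
      rw [Finset.sum_congr rfl (fun P hP => by
        rw [(Finset.mem_filter.mp hP).2]), Finset.sum_const, smul_eq_mul]
    have hsplit2 := Finset.sum_filter_add_sum_filter_not
      (Finset.univ.filter (fun P : PGPoint F => ¬ 2 * nP P = q^3+q^2))
      (fun P : PGPoint F => 2 * nP P = q^3) (fun P => g (2 * nP P))
    have hW : ∑ P ∈ (Finset.univ.filter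
          (fun P : PGPoint F => ¬ 2 * nP P = q^3+q^2)).filter
          (fun P : PGPoint F => 2 * nP P = q^3), g (2 * nP P) = w * g (q^3) := by
      have hWs : (Finset.univ.filter
          (fun P : PGPoint F => ¬ 2 * nP P = q^3+q^2)).filter
          (fun P : PGPoint F => 2 * nP P = q^3)
          = Finset.univ.filter (fun P : PGPoint F => 2 * nP P = q^3) := by
        ext P
        simp only [Finset.mem_filter, Finset.mem_univ, true_and, Finset.filter_filter]
        constructor
        · tauto
        · intro h3; exact ⟨by rw [h3]; exact hq3ne, h3⟩
      rw [hWs, Finset.sum_congr rfl (fun P hP => by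
        rw [(Finset.mem_filter.mp hP).2]), Finset.sum_const, smul_eq_mul]
    have hR : ∑ P ∈ (Finset.univ.filter
          (fun P : PGPoint F => ¬ 2 * nP P = q^3+q^2)).filter
          (fun P : PGPoint F => ¬ 2 * nP P = q^3), g (2 * nP P) = 0 := by
      apply Finset.sum_eq_zero
      intro P hP
      simp only [Finset.mem_filter, Finset.mem_univ, true_and, Finset.filter_filter] at hP
      rcases tri P with h0 | h3 | h4
      · rw [h0]; simpa using hg0
      · exact absurd h3 hP.2
      · exact absurd h4 hP.1
    rw [hB, ← hsplit2, hW, hR]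
    omega
  -- the number of points in a solid / plane / line
  have pts4 : ∀ S : PGSolid F,
      (Finset.univ.filter (fun P : PGPoint F => P.1 ≤ S.1)).card = q^3+q^2+q+1 :=
    fun S => aux_ptsF_card_eq hcard hq2 S.1 S.2 (aux_theta4 hq2)
  -- global count e1 : sum of degrees
  have e1sum : ∑ P : PGPoint F, nP P = h * (q^3+q^2+q+1) := by
    have hswap := aux_sum_swap (Finset.univ : Finset (PGPoint F)) HF
      (fun P S => P.1 ≤ S.1)
    rw [hnP]
    rw [hswap, Finset.sum_congr rfl (fun S _ => pts4 S), Finset.sum_const, smul_eq_mul]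
  -- global count e2 : pairs of distinct solids
  have e2sum : ∑ P : PGPoint F, (nP P * nP P - nP P) = (h * h - h) * (q^2+q+1) := by
    have hA : ∀ P : PGPoint F,
        (HF.offDiag.filter (fun e => P.1 ≤ e.1.1 ⊓ e.2.1)).card = nP P * nP P - nP P := by
      intro P
      have hset : HF.offDiag.filter (fun e => P.1 ≤ e.1.1 ⊓ e.2.1)
          = (HF.filter (fun S => P.1 ≤ S.1)).offDiag := by
        ext e
        simp only [Finset.mem_filter, Finset.mem_offDiag, le_inf_iff]
        tauto
      rw [hset, Finset.offDiag_card]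
    have hswap := aux_sum_swap (Finset.univ : Finset (PGPoint F)) HF.offDiag
      (fun P e => P.1 ≤ e.1.1 ⊓ e.2.1)
    calc ∑ P : PGPoint F, (nP P * nP P - nP P)
        = ∑ P : PGPoint F,
            (HF.offDiag.filter (fun e => P.1 ≤ e.1.1 ⊓ e.2.1)).card := by
          exact (Finset.sum_congr rfl (fun P _ => (hA P))).symm
    _ = ∑ e ∈ HF.offDiag,
            (Finset.univ.filter (fun P : PGPoint F => P.1 ≤ e.1.1 ⊓ e.2.1)).card := hswap
    _ = ∑ _e ∈ HF.offDiag, (q^2+q+1) := by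
          apply Finset.sum_congr rfl
          intro e he
          have hne : e.1 ≠ e.2 := (Finset.mem_offDiag.mp he).2.2
          exact aux_ptsF_card_eq hcard hq2 (e.1.1 ⊓ e.2.1)
            (aux_finrank_inf_solids e.1 e.2 hne) (aux_theta3 hq2)
    _ = (h * h - h) * (q^2+q+1) := by
          rw [Finset.sum_const, smul_eq_mul, Finset.offDiag_card]
  -- inputs to arith_core
  have hh1 : 1 ≤ h := by
    rw [hh]
    refine Finset.card_pos.mpr ?_
    obtain ⟨S, hS⟩ := hne
    exact ⟨S, by simp [hHF, hS]⟩
  have e1in : 2*h*(q^3+q^2+q+1) = w*q^3 + b*(q^3+q^2) := by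
    have h1 : ∑ P : PGPoint F, 2 * nP P = b * (q^3+q^2) + w * q^3 := hsum id rfl
    have h2 : ∑ P : PGPoint F, 2 * nP P = 2 * (h * (q^3+q^2+q+1)) := by
      rw [← Finset.mul_sum, e1sum]
    rw [h1] at h2
    linarith [h2]
  have e2in : 4*(h*h - h)*(q^2+q+1) + 2*(2*h*(q^3+q^2+q+1)) = w*q^6 + b*(q^3+q^2)^2 := by
    have hsq : ∑ P : PGPoint F, (2 * nP P)^2 = b * (q^3+q^2)^2 + w * (q^3)^2 :=
      hsum (fun k => k^2) (by norm_num)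
    have hkey : ∀ m : ℕ, 4*(m*m - m) + 2*(2*m) = (2*m)^2 := by
      intro m
      have hle : m ≤ m*m := by nlinarith
      have hsq' : (2*m)^2 = 4*(m*m) := by ring
      omega
    have hcomb : ∑ P : PGPoint F, (2 * nP P)^2
        = 4*(∑ P : PGPoint F, (nP P * nP P - nP P)) + 2*(∑ P : PGPoint F, 2 * nP P) := by
      rw [Finset.mul_sum, Finset.mul_sum, ← Finset.sum_add_distrib]
      exact Finset.sum_congr rfl (fun P _ => (hkey (nP P)).symm)
    rw [hsq, e2sum] at hcomb
    have h2 : ∑ P : PGPoint F, 2 * nP P = 2 * (h * (q^3+q^2+q+1)) := by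
      rw [← Finset.mul_sum, e1sum]
    rw [h2] at hcomb
    have hq6 : (q^3)^2 = q^6 := by ring
    rw [hq6] at hcomb
    linarith [hcomb]
  have harith : 2*h = q^4 + q^2 := arith_core q h w b hq hh1 e1in e2in
  -- plane counts
  set Pπ : Finset (PGPoint F) := Finset.univ.filter (fun P : PGPoint F => P.1 ≤ π.1) with hPπ
  have pts3π : Pπ.card = q^2+q+1 := aux_ptsF_card_eq hcard hq2 π.1 π.2 (aux_theta3 hq2)
  -- x as a filter card
  have hxcard : x = (Pπ.filter (fun P : PGPoint F => 2 * nP P = q^3+q^2)).card := by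
    rw [hx]
    have hset : blackIn q H π.1
        = ↑(Pπ.filter (fun P : PGPoint F => 2 * nP P = q^3+q^2)) := by
      ext P
      simp only [blackIn, Black, Set.mem_setOf_eq, Finset.coe_filter, hPπ,
        Finset.mem_filter, Finset.mem_univ, true_and, link P]
      tauto
    rw [hset, Set.ncard_coe_finset]
  set w' : ℕ := (Pπ.filter (fun P : PGPoint F => 2 * nP P = q^3)).card with hw'
  -- points of π are black or white
  have noRed : ∀ P : PGPoint F, P ∈ Pπ → ¬ (nP P = 0) := by
    intro P hP h0
    have hred : Red H P := by rw [Red, link P]; exact h0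
    exact hπ P hred (by simpa [hPπ] using hP)
  have hPsplit : x + w' = q^2+q+1 := by
    have hcompl : Pπ.filter (fun P : PGPoint F => ¬ 2 * nP P = q^3+q^2)
        = Pπ.filter (fun P : PGPoint F => 2 * nP P = q^3) := by
      ext P
      simp only [Finset.mem_filter]
      constructor
      · rintro ⟨hP, hnb⟩
        refine ⟨hP, ?_⟩
        rcases tri P with h0 | h3 | h4
        · exact absurd h0 (noRed P hP)
        · exact h3
        · exact absurd h4 hnb
      · rintro ⟨hP, h3⟩
        exact ⟨hP, by rw [h3]; exact hq3ne⟩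
    have := Finset.card_filter_add_card_filter_not
      (s := Pπ) (p := fun P : PGPoint F => 2 * nP P = q^3+q^2)
    rw [hcompl] at this
    rw [hxcard, hw']
    rw [this, pts3π]
  -- sum over plane : black/white values
  have Eπ1 : ∑ P ∈ Pπ, 2 * nP P = x * (q^3+q^2) + w' * q^3 := by
    rw [← Finset.sum_filter_add_sum_filter_not Pπ
      (fun P : PGPoint F => 2 * nP P = q^3+q^2)]
    have hBp : ∑ P ∈ Pπ.filter (fun P : PGPoint F => 2 * nP P = q^3+q^2), 2 * nP P
        = x * (q^3+q^2) := by
      rw [Finset.sum_congr rfl (fun P hP => (Finset.mem_filter.mp hP).2),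
        Finset.sum_const, smul_eq_mul, ← hxcard]
    have hcompl : Pπ.filter (fun P : PGPoint F => ¬ 2 * nP P = q^3+q^2)
        = Pπ.filter (fun P : PGPoint F => 2 * nP P = q^3) := by
      ext P
      simp only [Finset.mem_filter]
      constructor
      · rintro ⟨hP, hnb⟩
        refine ⟨hP, ?_⟩
        rcases tri P with h0 | h3 | h4
        · exact absurd h0 (noRed P hP)
        · exact h3
        · exact absurd h4 hnb
      · rintro ⟨hP, h3⟩
        exact ⟨hP, by rw [h3]; exact hq3ne⟩
    have hWp : ∑ P ∈ Pπ.filter (fun P : PGPoint F => ¬ 2 * nP P = q^3+q^2), 2 * nP P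
        = w' * q^3 := by
      rw [hcompl, Finset.sum_congr rfl (fun P hP => (Finset.mem_filter.mp hP).2),
        Finset.sum_const, smul_eq_mul, ← hw']
    rw [hBp, hWp]
  -- s as a filter card
  have hscard : s = (HF.filter (fun S => π.1 ≤ S.1)).card := by
    rw [hs]
    have hset : {S ∈ H | π.1 ≤ S.1} = ↑(HF.filter (fun S => π.1 ≤ S.1)) := by
      ext S
      simp [hHF]
    rw [hset, Set.ncard_coe_finset]
  have hsle : s ≤ h := by
    rw [hscard, hh]
    exact Finset.card_le_card (Finset.filter_subset _ _)
  -- sum over plane : solids side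
  have Eπ2 : ∑ P ∈ Pπ, nP P = s * (q^2+q+1) + (h - s) * (q+1) := by
    have hswap := aux_sum_swap Pπ HF (fun P S => P.1 ≤ S.1)
    have hper : ∀ S ∈ HF, (Pπ.filter (fun P : PGPoint F => P.1 ≤ S.1)).card
        = if π.1 ≤ S.1 then q^2+q+1 else q+1 := by
      intro S _
      have hset : Pπ.filter (fun P : PGPoint F => P.1 ≤ S.1)
          = Finset.univ.filter (fun P : PGPoint F => P.1 ≤ π.1 ⊓ S.1) := by
        ext P
        simp only [hPπ, Finset.mem_filter, Finset.mem_univ, true_and,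
          Finset.filter_filter, le_inf_iff]
      rw [hset]
      by_cases hcase : π.1 ≤ S.1
      · rw [if_pos hcase]
        have hinf : π.1 ⊓ S.1 = π.1 := inf_eq_left.mpr hcase
        rw [hinf]
        exact aux_ptsF_card_eq hcard hq2 π.1 π.2 (aux_theta3 hq2)
      · rw [if_neg hcase]
        exact aux_ptsF_card_eq hcard hq2 (π.1 ⊓ S.1)
          (aux_finrank_inf_plane π S hcase) (aux_theta2 hq2)
    calc ∑ P ∈ Pπ, nP P
        = ∑ S ∈ HF, (Pπ.filter (fun P : PGPoint F => P.1 ≤ S.1)).card := hswap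
    _ = ∑ S ∈ HF, (if π.1 ≤ S.1 then q^2+q+1 else q+1) :=
          Finset.sum_congr rfl hper
    _ = s * (q^2+q+1) + (h - s) * (q+1) := by
          rw [Finset.sum_ite, Finset.sum_const, Finset.sum_const, smul_eq_mul, smul_eq_mul]
          have hcards : (HF.filter (fun S => π.1 ≤ S.1)).card = s := hscard.symm
          have hcardn : (HF.filter (fun S => ¬ π.1 ≤ S.1)).card = h - s := by
            have := Finset.card_filter_add_card_filter_not
              (s := HF) (p := fun S => π.1 ≤ S.1)
            omega
          rw [hcards, hcardn]
  -- final computation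
  have hq0 : (q:ℤ) ≠ 0 := by
    have : 0 < q := by omega
    exact_mod_cast this.ne'
  have zE1 : (x:ℤ)*(q^3+q^2) + w'*q^3 = 2*(s*(q^2+q+1)) + 2*((h:ℤ)-s)*(q+1) := by
    have h2 : ∑ P ∈ Pπ, 2 * nP P = 2 * (s * (q^2+q+1) + (h - s) * (q+1)) := by
      rw [← Finset.mul_sum, Eπ2]
    rw [Eπ1] at h2
    have := h2
    zify [hsle] at this
    linarith [this]
  have zE2 : (x:ℤ) + w' = q^2+q+1 := by exact_mod_cast hPsplit
  have zH : 2*(h:ℤ) = q^4+q^2 := by exact_mod_cast harith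
  have key : (x:ℤ) * q^2 = (2*s+1) * q^2 := by
    linear_combination zE1 + ((q:ℤ)+1)*zH - (q:ℤ)^3*zE2
  have : (x:ℤ) = 2*s+1 := mul_right_cancel₀ (pow_ne_zero 2 hq0) key
  exact_mod_cast this
end
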